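/- Let V be a complete Souslin scheme that covers flesh(V), with |flesh(V)| ≤ 2^{ℵ₀}, and suppose that for every x ∈ flesh(V) the set branches_V(x) is a dense-in-itself subspace of the Baire space. Then V has a selector. -/

import Mathlib

open Set Topology

namespace PiSpacePaper

/-- The restriction `p↾n` of `p : ℕ → ℕ`, as a list of length `n`. -/
def restrictSeq (p : ℕ → ℕ) (n : ℕ) : List ℕ := (List.range n).map p

/-- The basic clopen set `S_a` of the Baire space. -/
def cyl (a : List ℕ) : Set (ℕ → ℕ) := {p | restrictSeq p a.length = a}

/-- The fruit `⋂ n, V (p↾n)` of a branch `p` in a Souslin scheme `V`. -/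
def fruit {X : Type*} (V : List ℕ → Set X) (p : ℕ → ℕ) : Set X :=
  ⋂ n : ℕ, V (restrictSeq p n)

/-- A Souslin scheme `V` covers the set `s`. -/
def Covers {X : Type*} (V : List ℕ → Set X) (s : Set X) : Prop :=
  V [] = s ∧ ∀ a : List ℕ, V a = ⋃ n : ℕ, V (a ++ [n])

/-- A Souslin scheme `V` partitions the set `s`. -/
def Partitions {X : Type*} (V : List ℕ → Set X) (s : Set X) : Prop :=
  Covers V s ∧ ∀ (a : List ℕ) (n m : ℕ), n ≠ m → V (a ++ [n]) ∩ V (a ++ [m]) = ∅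

/-- A Souslin scheme is complete iff all fruits are nonempty. -/
def Complete {X : Type*} (V : List ℕ → Set X) : Prop :=
  ∀ p : ℕ → ℕ, (fruit V p).Nonempty

/-- A Souslin scheme has strict branches iff every fruit is a singleton. -/
def StrictBranches {X : Type*} (V : List ℕ → Set X) : Prop :=
  ∀ p : ℕ → ℕ, ∃ x : X, fruit V p = {x}

/-- A Souslin scheme is open iff all its members are open sets. -/
def OpenScheme {X : Type*} [TopologicalSpace X] (V : List ℕ → Set X) : Prop :=
  ∀ a : List ℕ, IsOpen (V a)

/-- `flesh V = ⋃ a, V a`. -/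
def flesh {X : Type*} (V : List ℕ → Set X) : Set X := ⋃ a : List ℕ, V a

/-- `branches V x = {q ∈ ℕ^ℕ : x ∈ fruit V q}`. -/
def branches {X : Type*} (V : List ℕ → Set X) (x : X) : Set (ℕ → ℕ) :=
  {q | x ∈ fruit V q}

/-- A family `γ` of subsets is a π-net for a space: all members are nonempty and every
nonempty open set contains a member. -/
def IsPiNet {X : Type*} [TopologicalSpace X] (γ : Set (Set X)) : Prop :=
  (∀ G ∈ γ, G.Nonempty) ∧
  ∀ U : Set X, IsOpen U → U.Nonempty → ∃ G ∈ γ, G ⊆ U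

/-- A family `γ` of subsets is a π-base for a space: all members are nonempty open sets
and every nonempty open set contains a member. -/
def IsPiBase {X : Type*} [TopologicalSpace X] (γ : Set (Set X)) : Prop :=
  (∀ G ∈ γ, IsOpen G ∧ G.Nonempty) ∧
  ∀ U : Set X, IsOpen U → U.Nonempty → ∃ G ∈ γ, G ⊆ U

/-- A π-space: there is an open Souslin scheme that partitions the space, has strict
branches, and whose family of members is a π-base. -/
def IsPiSpace (X : Type*) [TopologicalSpace X] : Prop :=
  ∃ V : List ℕ → Set X, OpenScheme V ∧ Partitions V Set.univ ∧ StrictBranches V ∧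
    IsPiBase {S : Set X | ∃ a : List ℕ, S = V a}

/-- A Lusin π-base for a space. -/
def IsLusinPiBase {X : Type*} [TopologicalSpace X] (V : List ℕ → Set X) : Prop :=
  OpenScheme V ∧ Partitions V Set.univ ∧ StrictBranches V ∧
  ∀ (x : X) (U : Set X), IsOpen U → x ∈ U →
    ∃ (a : List ℕ) (n : ℕ), x ∈ V a ∧ (⋃ i : ℕ, ⋃ _ : n ≤ i, V (a ++ [i])) ⊆ U

/-- A map is quasi-open iff the image of every nonempty open set has nonempty interior. -/
def IsQuasiOpen {X Y : Type*} [TopologicalSpace X] [TopologicalSpace Y] (f : X → Y) : Prop :=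
  ∀ U : Set X, IsOpen U → U.Nonempty → (interior (f '' U)).Nonempty

/-- A π-net Souslin scheme on a space `X`: for every finite sequence `a`, the family
`{V b : b ⊒ a}` is a π-net for the subspace `V a` of `X` (whose nonempty open sets are
exactly the nonempty sets `U ∩ V a` with `U` open in `X`). -/
def IsPiNetScheme {X : Type*} [TopologicalSpace X] (V : List ℕ → Set X) : Prop :=
  ∀ a : List ℕ,
    (∀ b : List ℕ, a <+: b → (V b).Nonempty) ∧
    ∀ U : Set X, IsOpen U → (U ∩ V a).Nonempty → ∃ b : List ℕ, a <+: b ∧ V b ⊆ U ∩ V a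

/-- A π-base Souslin scheme on a space is an open π-net Souslin scheme. -/
def IsPiBaseScheme {X : Type*} [TopologicalSpace X] (V : List ℕ → Set X) : Prop :=
  OpenScheme V ∧ IsPiNetScheme V

/-- A selector on a Souslin scheme `V`: a surjection of the Baire space onto `flesh V`
such that every fiber `f⁻¹(x)` is a dense subset of the subspace `branches V x` of the
Baire space. -/
def IsSelector {X : Type*} (V : List ℕ → Set X) (f : (ℕ → ℕ) → X) : Prop :=
  Set.range f = flesh V ∧
  ∀ x ∈ flesh V, f ⁻¹' {x} ⊆ branches V x ∧ branches V x ⊆ closure (f ⁻¹' {x})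

/-- The topology `σ_{τ,f}` on the Baire space, generated by the subbase consisting of the
`τ`-preimages under `f` together with the basic sets `S_a`. -/
def sigmaTop {X : Type*} [TopologicalSpace X] (f : (ℕ → ℕ) → X) :
    TopologicalSpace (ℕ → ℕ) :=
  TopologicalSpace.generateFrom
    ({S : Set (ℕ → ℕ) | ∃ U : Set X, IsOpen U ∧ S = f ⁻¹' U} ∪
      {S : Set (ℕ → ℕ) | ∃ a : List ℕ, S = cyl a})

/-- The Souslin scheme `V^g`, where `V^g_a = V_{g ∘ a}`. -/
def schemeComp {X : Type*} (V : List ℕ → Set X) (g : ℕ → ℕ) : List ℕ → Set X :=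
  fun a => V (a.map g)

/-- A subset of the Baire space is dense-in-itself iff it has no isolated points. -/
def DenseInItself (B : Set (ℕ → ℕ)) : Prop :=
  ∀ q ∈ B, q ∈ closure (B \ {q})

/-- `X` is a continuous open image of a π-space. -/
def IsContinuousOpenImageOfPiSpace (X : Type) [TopologicalSpace X] : Prop :=
  ∃ (Y : Type) (_ : TopologicalSpace Y) (f : Y → X),
    IsPiSpace Y ∧ Continuous f ∧ IsOpenMap f ∧ Function.Surjective f

/-- The topology `τ_N` on the Baire space generated by the sets `U \ A` with `U` open in
the Baire space and `A` nowhere dense in the Baire space. -/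
def tauN : TopologicalSpace (ℕ → ℕ) :=
  TopologicalSpace.generateFrom
    {S : Set (ℕ → ℕ) | ∃ U A : Set (ℕ → ℕ), IsOpen U ∧ IsNowhereDense A ∧ S = U \ A}


section Aux

open Cardinal

lemma restrictSeq_length (p : ℕ → ℕ) (n : ℕ) : (restrictSeq p n).length = n := by
  simp [restrictSeq]

lemma restrictSeq_succ (p : ℕ → ℕ) (n : ℕ) :
    restrictSeq p (n + 1) = restrictSeq p n ++ [p n] := by
  simp [restrictSeq, List.range_succ]

lemma restrictSeq_eq_iff {p q : ℕ → ℕ} {n : ℕ} :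
    restrictSeq p n = restrictSeq q n ↔ ∀ i < n, p i = q i := by
  simp [restrictSeq, List.map_inj_left]

lemma cyl_restrictSeq (q : ℕ → ℕ) (n : ℕ) : cyl (restrictSeq q n) = PiNat.cylinder q n := by
  ext p
  simp only [cyl, mem_setOf_eq, restrictSeq_length, PiNat.mem_cylinder_iff]
  exact restrictSeq_eq_iff

lemma mem_cyl_restrictSeq {p q : ℕ → ℕ} {n : ℕ} :
    p ∈ cyl (restrictSeq q n) ↔ restrictSeq p n = restrictSeq q n := by
  rw [cyl_restrictSeq]
  rw [PiNat.mem_cylinder_iff]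
  exact restrictSeq_eq_iff.symm

lemma getD_concat_length (l : List ℕ) (k : ℕ) : (l ++ [k]).getD l.length 0 = k := by
  rw [List.getD_eq_getElem _ _ (by simp)]
  exact List.getElem_concat_length rfl _

lemma cyl_eq_cylinder (a : List ℕ) :
    ∃ q : ℕ → ℕ, q ∈ cyl a ∧ cyl a = PiNat.cylinder q a.length := by
  set q : ℕ → ℕ := fun i => a.getD i 0 with hqdef
  have hq : restrictSeq q a.length = a := by
    apply List.ext_getElem (by simp [restrictSeq_length])
    intro i h1 h2
    simp [restrictSeq, hqdef, List.getD, List.getElem?_eq_getElem h2]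
  refine ⟨q, hq, ?_⟩
  conv_lhs => rw [← hq]
  rw [cyl_restrictSeq]

lemma isOpen_cyl (a : List ℕ) : IsOpen (cyl a) := by
  obtain ⟨q, -, h⟩ := cyl_eq_cylinder a
  rw [h]; exact PiNat.isOpen_cylinder _ _ _

lemma isClosed_cylinder (q : ℕ → ℕ) (n : ℕ) : IsClosed (PiNat.cylinder q n) := by
  rw [PiNat.cylinder_eq_pi]
  exact isClosed_set_pi fun i _ => isClosed_singleton

lemma isClosed_cyl (a : List ℕ) : IsClosed (cyl a) := by
  obtain ⟨q, -, h⟩ := cyl_eq_cylinder a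
  rw [h]; exact isClosed_cylinder _ _

lemma mem_branches_iff {X : Type*} {V : List ℕ → Set X} {x : X} {q : ℕ → ℕ} :
    q ∈ branches V x ↔ ∀ n, x ∈ V (restrictSeq q n) := by
  simp [branches, fruit]

lemma isClosed_branches {X : Type*} (V : List ℕ → Set X) (x : X) :
    IsClosed (branches V x) := by
  rw [← isOpen_compl_iff, isOpen_iff_mem_nhds]
  intro q hq
  simp only [mem_compl_iff, mem_branches_iff, not_forall] at hq
  obtain ⟨n, hn⟩ := hq
  refine Filter.mem_of_superset
    ((PiNat.isOpen_cylinder _ q n).mem_nhds (PiNat.self_mem_cylinder q n)) ?_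
  intro p hp
  simp only [mem_compl_iff, mem_branches_iff, not_forall]
  refine ⟨n, ?_⟩
  rwa [restrictSeq_eq_iff.2 (PiNat.mem_cylinder_iff.1 hp)]

lemma mem_closure_iff_restrict {S : Set (ℕ → ℕ)} {q : ℕ → ℕ} :
    q ∈ closure S ↔ ∀ n, ∃ p ∈ S, restrictSeq p n = restrictSeq q n := by
  constructor
  · intro h n
    obtain ⟨p, hp1, hp2⟩ := _root_.mem_closure_iff.1 h _
      (PiNat.isOpen_cylinder _ q n) (PiNat.self_mem_cylinder q n)
    exact ⟨p, hp2, restrictSeq_eq_iff.2 (PiNat.mem_cylinder_iff.1 hp1)⟩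
  · intro h
    rw [_root_.mem_closure_iff]
    intro U hU hqU
    obtain ⟨v, ⟨y, n, rfl⟩, hqv, hvU⟩ :=
      (PiNat.isTopologicalBasis_cylinders _).exists_subset_of_mem_open hqU hU
    obtain ⟨p, hpS, hpq⟩ := h n
    refine ⟨p, hvU ?_, hpS⟩
    intro i hi
    rw [restrictSeq_eq_iff.1 hpq i hi]
    exact PiNat.mem_cylinder_iff.1 hqv i hi

lemma continuum_le_of_perfect {C : Set (ℕ → ℕ)} (hC : Perfect C) (hne : C.Nonempty) :
    Cardinal.continuum ≤ #C := by
  letI : MetricSpace (ℕ → ℕ) := PiNat.metricSpaceNatNat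
  haveI : CompleteSpace (ℕ → ℕ) := by
    refine Metric.complete_of_convergent_controlled_sequences (fun n => (1/2)^n) (by simp) ?_
    intro u hu
    refine ⟨fun n => u n n, tendsto_pi_nhds.2 fun i => ?_⟩
    refine tendsto_const_nhds.congr' ?_
    filter_upwards [Filter.Ici_mem_atTop i] with n hn
    exact PiNat.apply_eq_of_dist_lt (hu i i n le_rfl hn) le_rfl
  obtain ⟨g, hgC, -, hg⟩ := hC.exists_nat_bool_injection hne
  have h1 : #(ℕ → Bool) ≤ #C :=
    Cardinal.mk_le_of_injective (f := fun y => (⟨g y, hgC (Set.mem_range_self y)⟩ : C))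
      (fun a b h => hg (congrArg Subtype.val h))
  refine le_trans (le_of_eq ?_) h1
  rw [← Cardinal.two_power_aleph0]
  simp [Cardinal.mk_arrow]

lemma exists_injective_choice {ι α : Type} (S : ι → Set α)
    (hι : #ι ≤ Cardinal.continuum) (hS : ∀ i, Cardinal.continuum ≤ #(S i)) :
    ∃ F : ι → α, Function.Injective F ∧ ∀ i, F i ∈ S i := by
  obtain ⟨e⟩ : Nonempty (ι ↪ Cardinal.continuum.{0}.ord.ToType) := by
    rw [← Cardinal.le_def, Cardinal.mk_ord_toType]
    exact hι
  haveI hwo : IsWellOrder Cardinal.continuum.{0}.ord.ToType (· < ·) := isWellOrder_lt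
  set r : ι → ι → Prop := fun i j => e i < e j with hr
  have hwf : WellFounded r := InvImage.wf e (IsWellFounded.wf)
  have hcard : ∀ i : ι, #{j : ι // r j i} < Cardinal.continuum := by
    intro i
    have h1 : #{j : ι // r j i} ≤ #{b : Cardinal.continuum.{0}.ord.ToType // b < e i} :=
      Cardinal.mk_le_of_injective (f := fun j => ⟨e j.1, j.2⟩)
        (fun a b h => Subtype.ext (e.injective (congrArg Subtype.val h)))
    have h3 := Ordinal.typein_lt_self (e i)
    rw [Cardinal.lt_ord] at h3
    have h4 : #{b : Cardinal.continuum.{0}.ord.ToType // b < e i} =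
        (Ordinal.typein (α := Cardinal.continuum.{0}.ord.ToType) (· < ·) (e i)).card :=
      Ordinal.card_typein _
    exact h1.trans_lt (by rw [h4]; exact h3)
  have key : ∀ (i : ι) (IH : ∀ j, r j i → α),
      (S i \ {p | ∃ j, ∃ h : r j i, IH j h = p}).Nonempty := by
    intro i IH
    rw [Set.nonempty_iff_ne_empty]
    intro hcon
    have hsub : S i ⊆ Set.range (fun j : {j : ι // r j i} => IH j.1 j.2) := by
      intro p hp
      have : p ∉ (S i \ {p | ∃ j, ∃ h : r j i, IH j h = p}) := by
        rw [hcon]; exact notMem_empty p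
      simp only [Set.mem_diff, hp, true_and, not_not, Set.mem_setOf_eq] at this
      obtain ⟨j, h, hj⟩ := this
      exact ⟨⟨j, h⟩, hj⟩
    have h2 : #(S i) ≤ #{j : ι // r j i} :=
      (Cardinal.mk_le_mk_of_subset hsub).trans (Cardinal.mk_range_le)
    exact absurd (hcard i) (not_lt.2 ((hS i).trans h2))
  let F : ι → α := hwf.fix (fun i IH => (key i IH).some)
  have hFmem : ∀ i, F i ∈ S i \ {p | ∃ j, ∃ _ : r j i, F j = p} := by
    intro i
    have : F i = (key i (fun j _ => F j)).some := hwf.fix_eq _ i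
    rw [this]
    exact (key i (fun j _ => F j)).some_mem
  refine ⟨F, ?_, fun i => (hFmem i).1⟩
  intro i j hij
  by_contra hne
  rcases lt_trichotomy (e i) (e j) with h | h | h
  · exact (hFmem j).2 ⟨i, h, hij⟩
  · exact hne (e.injective h)
  · exact (hFmem i).2 ⟨j, h, hij.symm⟩

lemma exists_branch {X : Type*} {V : List ℕ → Set X}
    (hcov : ∀ a : List ℕ, V a = ⋃ n : ℕ, V (a ++ [n])) {x : X} (hx : x ∈ V []) :
    ∃ q : ℕ → ℕ, ∀ n, x ∈ V (restrictSeq q n) := by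
  have step : ∀ a : List ℕ, x ∈ V a → ∃ n, x ∈ V (a ++ [n]) := by
    intro a ha
    rw [hcov a] at ha
    exact Set.mem_iUnion.1 ha
  let g : ℕ → {a : List ℕ // x ∈ V a} := fun n =>
    Nat.rec ⟨[], hx⟩
      (fun _ ih => ⟨ih.1 ++ [(step ih.1 ih.2).choose], (step ih.1 ih.2).choose_spec⟩) n
  have hg : ∀ n, ∃ k, (g (n + 1)).1 = (g n).1 ++ [k] := fun n => ⟨_, rfl⟩
  have hlen : ∀ n, (g n).1.length = n := by
    intro n
    induction n with
    | zero => rfl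
    | succ n ih =>
      obtain ⟨k, hk⟩ := hg n
      rw [hk]
      simp [ih]
  refine ⟨fun n => (g (n + 1)).1.getD n 0, ?_⟩
  have hres : ∀ n, restrictSeq (fun n => (g (n + 1)).1.getD n 0) n = (g n).1 := by
    intro n
    induction n with
    | zero => rfl
    | succ n ih =>
      obtain ⟨k, hk⟩ := hg n
      have hq : (g (n + 1)).1.getD n 0 = k := by
        have hl := getD_concat_length (g n).1 k
        rw [hlen n] at hl
        rw [hk, hl]
      rw [restrictSeq_succ, ih, hq, ← hk]
  intro n
  exact (hres n) ▸ (g n).2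

end Aux
open Cardinal

/-- A complete Souslin scheme covering its flesh, with flesh of cardinality
at most the continuum and all branch sets dense-in-themselves, has a selector. -/
theorem statement16 {X : Type} (V : List ℕ → Set X) (hcomp : Complete V)
    (hcov : Covers V (flesh V)) (hcard : Cardinal.mk (flesh V) ≤ Cardinal.continuum)
    (hdense : ∀ x ∈ flesh V, DenseInItself (branches V x)) :
    ∃ f : (ℕ → ℕ) → X, IsSelector V f := by
  classical
  have hbranch : ∀ x ∈ flesh V, (branches V x).Nonempty := by
    intro x hx
    obtain ⟨q, hq⟩ := exists_branch hcov.2 (show x ∈ V [] from hcov.1.symm ▸ hx)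
    exact ⟨q, mem_branches_iff.2 hq⟩
  let I : Type := {ia : X × List ℕ // ia.1 ∈ flesh V ∧ (branches V ia.1 ∩ cyl ia.2).Nonempty}
  let S : I → Set (ℕ → ℕ) := fun i => branches V i.1.1 ∩ cyl i.1.2
  have hIcard : Cardinal.mk I ≤ Cardinal.continuum := by
    have h1 : Cardinal.mk I ≤ Cardinal.mk (↥(flesh V) × List ℕ) :=
      Cardinal.mk_le_of_injective (f := fun i : I => ((⟨i.1.1, i.2.1⟩ : ↥(flesh V)), i.1.2))
        (by
          rintro ⟨⟨x, a⟩, hx⟩ ⟨⟨y, b⟩, hy⟩ h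
          simp only [Prod.mk.injEq, Subtype.mk.injEq] at h
          exact Subtype.ext (by rw [Prod.ext_iff]; exact ⟨h.1, h.2⟩))
    refine h1.trans ?_
    rw [Cardinal.mk_prod, Cardinal.lift_id, Cardinal.lift_id, Cardinal.mk_list_eq_aleph0]
    calc Cardinal.mk (↥(flesh V)) * Cardinal.aleph0
        ≤ Cardinal.continuum * Cardinal.continuum :=
          mul_le_mul' hcard Cardinal.aleph0_le_continuum
      _ = Cardinal.continuum := Cardinal.mul_eq_self Cardinal.aleph0_le_continuum
  have hScard : ∀ i : I, Cardinal.continuum ≤ Cardinal.mk (S i) := by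
    rintro ⟨⟨x, a⟩, hx, hne⟩
    refine continuum_le_of_perfect ⟨?_, ?_⟩ hne
    · exact (isClosed_branches V x).inter (isClosed_cyl a)
    · intro p hp
      rw [accPt_principal_iff_clusterPt, ← mem_closure_iff_clusterPt]
      have h1 : p ∈ closure (branches V x \ {p}) := hdense x hx p hp.1
      have h2 : cyl a ∩ closure (branches V x \ {p}) ⊆
          closure (cyl a ∩ (branches V x \ {p})) := (isOpen_cyl a).inter_closure
      refine closure_mono ?_ (h2 ⟨hp.2, h1⟩)
      rintro y ⟨hy1, hy2, hy3⟩
      exact ⟨⟨hy2, hy1⟩, hy3⟩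
  obtain ⟨F, hFinj, hFmem⟩ := exists_injective_choice S hIcard hScard
  let f : (ℕ → ℕ) → X := fun p => if h : ∃ i : I, F i = p then h.choose.1.1 else (hcomp p).some
  have hf_hit : ∀ i : I, f (F i) = i.1.1 := by
    intro i
    have h : ∃ i' : I, F i' = F i := ⟨i, rfl⟩
    have h2 : f (F i) = h.choose.1.1 := dif_pos h
    rw [h2, hFinj h.choose_spec]
  have hfiber : ∀ p, p ∈ branches V (f p) := by
    intro p
    by_cases h : ∃ i : I, F i = p
    · obtain ⟨i, rfl⟩ := h
      rw [hf_hit i]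
      exact (hFmem i).1
    · have h2 : f p = (hcomp p).some := dif_neg h
      show f p ∈ fruit V p
      rw [h2]
      exact (hcomp p).some_mem
  refine ⟨f, ?_, ?_⟩
  · apply Set.eq_of_subset_of_subset
    · rintro y ⟨p, rfl⟩
      have h1 : f p ∈ fruit V p := hfiber p
      have h2 : f p ∈ V (restrictSeq p 0) := Set.mem_iInter.1 h1 0
      rwa [show restrictSeq p 0 = [] from rfl, hcov.1] at h2
    · intro x hx
      obtain ⟨q, hq⟩ := hbranch x hx
      have hq0 : q ∈ cyl [] := rfl
      exact ⟨F ⟨(x, []), hx, ⟨q, hq, hq0⟩⟩, hf_hit _⟩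
  · intro x hx
    constructor
    · intro p hp
      have h1 : f p = x := hp
      rw [← h1]
      exact hfiber p
    · intro q hq
      rw [mem_closure_iff_restrict]
      intro n
      have hq2 : q ∈ cyl (restrictSeq q n) := mem_cyl_restrictSeq.2 rfl
      refine ⟨F ⟨(x, restrictSeq q n), hx, ⟨q, hq, hq2⟩⟩, ?_, ?_⟩
      · show f (F ⟨(x, restrictSeq q n), hx, ⟨q, hq, hq2⟩⟩) ∈ ({x} : Set X)
        rw [hf_hit]
        rfl
      · have h3 : F ⟨(x, restrictSeq q n), hx, ⟨q, hq, hq2⟩⟩ ∈ cyl (restrictSeq q n) :=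
          (hFmem ⟨(x, restrictSeq q n), hx, ⟨q, hq, hq2⟩⟩).2
        exact mem_cyl_restrictSeq.1 h3
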